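/- The rook polynomials R_n(t) of the boards associated with forbidden set S = {0,1} (cells (i,i) and (i,i+1) in an n×n grid) satisfy R_n(t) = (1+2t)R_{n-1}(t) - t² R_{n-2}(t) for n ≥ 3, with R_1(t) = 1+t and R_2(t) = 1+3t+t². -/

import Mathlib

/-- No two cells of `T` share a row or a column. -/
def NonAttacking (T : Finset (ℕ × ℕ)) : Prop :=
  ∀ c ∈ T, ∀ d ∈ T, c ≠ d → c.1 ≠ d.1 ∧ c.2 ≠ d.2

/-- The number of non-attacking placements of `k` rooks on the board `B`. -/
noncomputable def rookCount (B : Finset (ℕ × ℕ)) (k : ℕ) : ℕ :=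
  Nat.card {T : Finset (ℕ × ℕ) // T ⊆ B ∧ T.card = k ∧ NonAttacking T}

/-- The board for the forbidden set S = {0,1}: cells (i,i) for 1 ≤ i ≤ n
and (i,i+1) for 1 ≤ i ≤ n-1, inside the n×n grid. -/
def straightBoard (n : ℕ) : Finset (ℕ × ℕ) :=
  ((Finset.Icc 1 n).image fun i => (i, i)) ∪
    ((Finset.Icc 1 (n - 1)).image fun i => (i, i + 1))

open Polynomial in
/-- The rook polynomial of the board. -/
noncomputable def rookPoly (n : ℕ) : Polynomial ℚ :=
  ∑ k ∈ Finset.range (n + 1), (rookCount (straightBoard n) k : ℚ) • X ^ k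

def Sparse (S : Finset ℕ) : Prop := ∀ a ∈ S, a + 1 ∉ S

instance : DecidablePred Sparse := fun S =>
  decidable_of_iff (∀ a ∈ S, a + 1 ∉ S) Iff.rfl

instance : DecidablePred NonAttacking := fun T =>
  decidable_of_iff (∀ c ∈ T, ∀ d ∈ T, c ≠ d → c.1 ≠ d.1 ∧ c.2 ≠ d.2) Iff.rfl

def spCount (m k : ℕ) : ℕ := (((Finset.range m).powersetCard k).filter Sparse).card

lemma sparse_mono {S T : Finset ℕ} (h : S ⊆ T) (hT : Sparse T) : Sparse S :=
  fun a ha hb => hT a (h ha) (h hb)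

lemma spCount_rec (m k : ℕ) :
    spCount (m + 2) (k + 1) = spCount (m + 1) (k + 1) + spCount m k := by
  classical
  unfold spCount
  set A := ((Finset.range (m+2)).powersetCard (k+1)).filter Sparse with hA
  rw [← Finset.card_filter_add_card_filter_not (s := A) (p := fun T => (m+1) ∉ T)]
  congr 1
  · -- not containing m+1 : equals the (m+1, k+1) set
    congr 1
    ext T
    simp only [hA, Finset.mem_filter, Finset.mem_powersetCard]
    constructor
    · rintro ⟨⟨⟨hsub, hcard⟩, hsp⟩, hnot⟩
      refine ⟨⟨fun a ha => ?_, hcard⟩, hsp⟩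
      have := hsub ha
      simp only [Finset.mem_range] at this ⊢
      rcases Nat.lt_succ_iff_lt_or_eq.1 this with h | h
      · exact h
      · exact absurd (h ▸ ha) hnot
    · rintro ⟨⟨hsub, hcard⟩, hsp⟩
      have hnot : (m+1) ∉ T := fun h => by
        have := hsub h; simp at this
      exact ⟨⟨⟨fun a ha => by
        have := hsub ha; simp only [Finset.mem_range] at this ⊢; omega, hcard⟩, hsp⟩, hnot⟩
  · -- containing m+1
    apply Finset.card_nbij' (i := fun T => T.erase (m+1)) (j := fun S => insert (m+1) S)
    · intro T hT
      simp only [hA, Finset.mem_coe, Finset.mem_filter, Finset.mem_powersetCard, not_not] at hT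
      obtain ⟨⟨⟨hsub, hcard⟩, hsp⟩, hmem⟩ := hT
      have hmnot : m ∉ T := fun h => hsp m h hmem
      simp only [Finset.mem_coe, Finset.mem_filter, Finset.mem_powersetCard]
      refine ⟨⟨fun a ha => ?_, ?_⟩, sparse_mono (Finset.erase_subset _ _) hsp⟩
      · rw [Finset.mem_erase] at ha
        have := hsub ha.2
        simp only [Finset.mem_range] at this ⊢
        rcases eq_or_ne a m with rfl | hne
        · exact absurd ha.2 hmnot
        · omega
      · rw [Finset.card_erase_of_mem hmem, hcard]; omega
        
    · intro S hS
      simp only [Finset.mem_coe, Finset.mem_filter, Finset.mem_powersetCard] at hS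
      obtain ⟨⟨hsub, hcard⟩, hsp⟩ := hS
      have hmnot : (m+1) ∉ S := fun h => by have := hsub h; simp at this
      simp only [hA, Finset.mem_coe, Finset.mem_filter, Finset.mem_powersetCard, not_not,
        Finset.mem_insert]
      refine ⟨⟨⟨fun a ha => ?_, ?_⟩, ?_⟩, Or.inl trivial⟩
      · rcases Finset.mem_insert.1 ha with rfl | ha
        · simp
        · have := hsub ha; simp only [Finset.mem_range] at this ⊢; omega
      · rw [Finset.card_insert_of_notMem hmnot, hcard]
      · intro a ha hb
        rcases Finset.mem_insert.1 ha with rfl | ha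
        · rcases Finset.mem_insert.1 hb with h | hb
          · omega
          · have := hsub hb; simp at this; omega
        · rcases Finset.mem_insert.1 hb with h | hb
          · have := hsub ha; simp only [Finset.mem_range] at this; omega
          · exact hsp a ha hb
    · intro T hT
      simp only [hA, Finset.mem_coe, Finset.mem_filter, not_not] at hT
      exact Finset.insert_erase hT.2
    · intro S hS
      simp only [Finset.mem_coe, Finset.mem_filter, Finset.mem_powersetCard] at hS
      have hmnot : (m+1) ∉ S := fun h => by have := hS.1.1 h; simp at this
      exact Finset.erase_insert hmnot

lemma spCount_zero_right (m : ℕ) : spCount m 0 = 1 := by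
  simp only [spCount, Finset.powersetCard_zero, Finset.filter_singleton]
  rw [if_pos (show Sparse ∅ from fun a ha => by simp at ha)]
  simp

lemma spCount_of_lt {m k : ℕ} (h : m < k) : spCount m k = 0 := by
  unfold spCount
  rw [Finset.powersetCard_eq_empty.2 (by simpa using h)]
  simp

lemma spCount_eq_zero : ∀ m k, m + 1 < 2 * k → spCount m k = 0
  | 0, k, h => spCount_of_lt (by omega)
  | 1, k, h => spCount_of_lt (by omega)
  | (m+2), 0, h => by omega
  | (m+2), (k+1), h => by
      rw [spCount_rec, spCount_eq_zero (m+1) (k+1) (by omega),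
        spCount_eq_zero m k (by omega)]

lemma spCount_one : ∀ m, spCount m 1 = m
  | 0 => by decide
  | 1 => by decide
  | (m+2) => by rw [spCount_rec, spCount_one (m+1), spCount_zero_right]

lemma spCount_key (m k : ℕ) :
    spCount (m+4) (k+2) + spCount m k
      = spCount (m+2) (k+2) + 2 * spCount (m+2) (k+1) := by
  have h1 : spCount (m+4) (k+2) = spCount (m+3) (k+2) + spCount (m+2) (k+1) :=
    spCount_rec (m+2) (k+1)
  have h2 : spCount (m+3) (k+2) = spCount (m+2) (k+2) + spCount (m+1) (k+1) :=
    spCount_rec (m+1) (k+1)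
  have h3 : spCount (m+2) (k+1) = spCount (m+1) (k+1) + spCount m k :=
    spCount_rec m k
  omega

def enc (c : ℕ × ℕ) : ℕ := c.1 + c.2 - 2
def dec (j : ℕ) : ℕ × ℕ := (j / 2 + 1, j - j / 2 + 1)

lemma mem_straightBoard {n : ℕ} {c : ℕ × ℕ} :
    c ∈ straightBoard n ↔ (c.2 = c.1 ∨ c.2 = c.1 + 1) ∧ 1 ≤ c.1 ∧ c.2 ≤ n := by
  obtain ⟨a, b⟩ := c
  simp only [straightBoard, Finset.mem_union, Finset.mem_image, Finset.mem_Icc,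
    Prod.mk.injEq]
  constructor
  · rintro (⟨i, ⟨h1, h2⟩, rfl, rfl⟩ | ⟨i, ⟨h1, h2⟩, rfl, rfl⟩) <;> simp <;> omega
  · rintro ⟨hb | hb, h1, h2⟩
    · exact Or.inl ⟨a, ⟨h1, by omega⟩, rfl, hb.symm⟩
    · exact Or.inr ⟨a, ⟨h1, by omega⟩, rfl, hb.symm⟩

lemma enc_dec (j : ℕ) : enc (dec j) = j := by
  simp only [enc, dec]
  omega

lemma dec_enc {n : ℕ} {c : ℕ × ℕ} (h : c ∈ straightBoard n) : dec (enc c) = c := by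
  rw [mem_straightBoard] at h
  obtain ⟨a, b⟩ := c
  simp only [enc, dec, Prod.mk.injEq] at *
  omega

lemma enc_lt {n : ℕ} {c : ℕ × ℕ} (h : c ∈ straightBoard n) : enc c < 2 * n - 1 := by
  rw [mem_straightBoard] at h
  simp only [enc]
  omega

lemma attack_iff {n : ℕ} {c d : ℕ × ℕ} (hc : c ∈ straightBoard n)
    (hd : d ∈ straightBoard n) (hne : c ≠ d) :
    (c.1 = d.1 ∨ c.2 = d.2) ↔ (enc c = enc d + 1 ∨ enc d = enc c + 1) := by
  rw [mem_straightBoard] at hc hd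
  obtain ⟨a, b⟩ := c
  obtain ⟨a', b'⟩ := d
  have hne' : ¬ (a = a' ∧ b = b') := by
    intro ⟨h1, h2⟩; exact hne (by simp [h1, h2])
  simp only [enc] at *
  omega

lemma enc_injOn {n : ℕ} {c d : ℕ × ℕ} (hc : c ∈ straightBoard n)
    (hd : d ∈ straightBoard n) (h : enc c = enc d) : c = d := by
  rw [← dec_enc hc, ← dec_enc hd, h]

lemma rookCount_eq (n k : ℕ) :
    rookCount (straightBoard n) k = spCount (2 * n - 1) k := by
  classical
  have hiff : ∀ T : Finset (ℕ × ℕ),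
      (T ⊆ straightBoard n ∧ T.card = k ∧ NonAttacking T) ↔
        T ∈ ((straightBoard n).powersetCard k).filter NonAttacking := by
    intro T
    simp only [Finset.mem_filter, Finset.mem_powersetCard]
    tauto
  rw [rookCount, Nat.card_congr (Equiv.subtypeEquivRight hiff),
    Nat.card_eq_finsetCard]
  unfold spCount
  apply Finset.card_nbij' (i := fun T => T.image enc) (j := fun S => S.image dec)
  · intro T hT
    simp only [Finset.mem_coe, Finset.mem_filter, Finset.mem_powersetCard] at hT
    obtain ⟨⟨hsub, hcard⟩, hNA⟩ := hT
    simp only [Finset.mem_coe, Finset.mem_filter, Finset.mem_powersetCard]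
    refine ⟨⟨fun x hx => ?_, ?_⟩, ?_⟩
    · obtain ⟨c, hc, rfl⟩ := Finset.mem_image.1 hx
      exact Finset.mem_range.2 (enc_lt (hsub hc))
    · rw [Finset.card_image_of_injOn (fun c hc d hd h => enc_injOn (hsub hc) (hsub hd) h),
        hcard]
    · intro x hx hx1
      obtain ⟨c, hc, rfl⟩ := Finset.mem_image.1 hx
      obtain ⟨c', hc', he⟩ := Finset.mem_image.1 hx1
      have hne : c' ≠ c := fun h => by rw [h] at he; omega
      have := hNA c' hc' c hc hne
      have hatt := (attack_iff (hsub hc') (hsub hc) hne).2 (Or.inl he)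
      tauto
  · intro S hS
    simp only [Finset.mem_coe, Finset.mem_filter, Finset.mem_powersetCard] at hS
    obtain ⟨⟨hsub, hcard⟩, hsp⟩ := hS
    have hdmem : ∀ j ∈ S, dec j ∈ straightBoard n := by
      intro j hj
      have := Finset.mem_range.1 (hsub hj)
      rw [mem_straightBoard]
      simp only [dec]
      omega
    simp only [Finset.mem_coe, Finset.mem_filter, Finset.mem_powersetCard]
    refine ⟨⟨fun c hc => ?_, ?_⟩, ?_⟩
    · obtain ⟨j, hj, rfl⟩ := Finset.mem_image.1 hc
      exact hdmem j hj
    · rw [Finset.card_image_of_injOn (fun j _ j' _ h => by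
        have := enc_dec j; have := enc_dec j'; rw [h] at *; omega), hcard]
    · intro c hc c' hc' hne
      obtain ⟨j, hj, rfl⟩ := Finset.mem_image.1 hc
      obtain ⟨j', hj', rfl⟩ := Finset.mem_image.1 hc'
      have h1 := hsp j hj
      have h2 := hsp j' hj'
      have hadj : ¬ (enc (dec j) = enc (dec j') + 1 ∨ enc (dec j') = enc (dec j) + 1) := by
        rw [enc_dec, enc_dec]
        rintro (h | h)
        · exact h2 (h ▸ hj)
        · exact h1 (h ▸ hj')
      have := (attack_iff (hdmem j hj) (hdmem j' hj') hne).not.2 hadj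
      tauto
  · intro T hT
    simp only [Finset.mem_coe, Finset.mem_filter, Finset.mem_powersetCard] at hT
    show (T.image enc).image dec = T
    rw [Finset.image_image]
    rw [show T = T.image id from (Finset.image_id).symm]
    simp only [Finset.image_image]
    apply Finset.image_congr
    intro c hc
    simp only [Function.comp_apply, id_eq]
    exact dec_enc (hT.1.1 (by simpa using hc))
  · intro S hS
    show (S.image dec).image enc = S
    rw [Finset.image_image]
    have : ∀ j ∈ S, (enc ∘ dec) j = id j := fun j _ => enc_dec j
    rw [Finset.image_congr this, Finset.image_id]

open Polynomial in
lemma coeff_rookPoly (n j : ℕ) : (rookPoly n).coeff j = (spCount (2 * n - 1) j : ℚ) := by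
  rw [rookPoly]
  simp only [Polynomial.finset_sum_coeff, Polynomial.coeff_smul, Polynomial.coeff_X_pow,
    smul_eq_mul, mul_ite, mul_one, mul_zero]
  rw [Finset.sum_ite_eq (Finset.range (n + 1)) j]
  split_ifs with h
  · rw [rookCount_eq]
  · rw [spCount_eq_zero (2 * n - 1) j (by simp at h; omega)]
    simp


open Polynomial in
theorem rookPoly_recurrence :
    (∀ n, 3 ≤ n →
        rookPoly n = (1 + 2 * X) * rookPoly (n - 1) - X ^ 2 * rookPoly (n - 2)) ∧
      rookPoly 1 = 1 + X ∧ rookPoly 2 = 1 + 3 * X + X ^ 2 := by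
  refine ⟨?_, ?_, ?_⟩
  · intro n hn
    obtain ⟨p, rfl⟩ : ∃ p, n = p + 3 := ⟨n - 3, by omega⟩
    have e1 : p + 3 - 1 = p + 2 := rfl
    have e2 : p + 3 - 2 = p + 1 := rfl
    rw [e1, e2]
    have expand : (1 + 2 * X) * rookPoly (p+2)
        = rookPoly (p+2) + Polynomial.C 2 * (X * rookPoly (p+2)) := by
      have h2 : (Polynomial.C (2:ℚ)) = (2 : ℚ[X]) := by
        simp only [map_ofNat]
      rw [h2]; ring
    have a1 : 2 * (p+3) - 1 = 2*p+5 := by omega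
    have a2 : 2 * (p+2) - 1 = 2*p+3 := by omega
    have a3 : 2 * (p+1) - 1 = 2*p+1 := by omega
    ext j
    rw [Polynomial.coeff_sub, expand, Polynomial.coeff_add, Polynomial.coeff_C_mul,
      coeff_rookPoly, coeff_rookPoly, a1, a2]
    rcases j with _ | j
    · simp only [Polynomial.mul_coeff_zero, Polynomial.coeff_X_zero, zero_mul, mul_zero,
        spCount_zero_right]
      norm_num
    · rw [Polynomial.coeff_X_mul, coeff_rookPoly, a2]
      rcases j with _ | k
      · have : (X^2 * rookPoly (p+1)).coeff 1 = 0 := by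
          rw [pow_two, mul_assoc, Polynomial.coeff_X_mul, Polynomial.mul_coeff_zero,
            Polynomial.coeff_X_zero, zero_mul]
        rw [this, spCount_one, spCount_one, spCount_zero_right]
        push_cast; ring
      · rw [Polynomial.coeff_X_pow_mul, coeff_rookPoly, a3]
        have hk := spCount_key (2*p+1) k
        have e4 : 2*p+1+4 = 2*p+5 := by omega
        have e5 : 2*p+1+2 = 2*p+3 := by omega
        rw [e4, e5] at hk
        have hq : ((spCount (2*p+5) (k+2) : ℚ)) + (spCount (2*p+1) k : ℚ)
            = (spCount (2*p+3) (k+2) : ℚ) + 2 * (spCount (2*p+3) (k+1) : ℚ) := by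
          exact_mod_cast congrArg (Nat.cast : ℕ → ℚ) hk
        linarith
  · rw [rookPoly, Finset.sum_range_succ, Finset.sum_range_one,
      rookCount_eq 1 0, rookCount_eq 1 1]
    have h0 : spCount (2*1-1) 0 = 1 := by decide
    have h1 : spCount (2*1-1) 1 = 1 := by decide
    rw [h0, h1]
    simp
  · rw [rookPoly, Finset.sum_range_succ, Finset.sum_range_succ, Finset.sum_range_one,
      rookCount_eq 2 0, rookCount_eq 2 1, rookCount_eq 2 2]
    have h0 : spCount (2*2-1) 0 = 1 := by decide
    have h1 : spCount (2*2-1) 1 = 3 := by decide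
    have h2 : spCount (2*2-1) 2 = 1 := by decide
    rw [h0, h1, h2]
    simp only [Polynomial.smul_eq_C_mul, Polynomial.C_eq_natCast, pow_zero, pow_one]
    push_cast
    ring
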